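/- There exists a constant C_{β,γ} > 0, depending only on β and γ, such that for all integers n ≥ 1, Σ_{j=0}^{n−1} (j+1)^{−1/γ + 1} (n−j)^{−1/γ + β/γ} ≤ C_{β,γ} (n+1)^{−1/γ + 1}. -/

import Mathlib

open Finset Real

private lemma bern_aux {p : ℝ} (hp0 : 0 < p) (hp1 : p ≤ 1) (x : ℝ) (hx : 0 ≤ x) :
    p * (x + 1) ^ (p - 1) ≤ (x + 1) ^ p - x ^ p := by
  have hx1 : (0:ℝ) < x + 1 := by linarith
  have ht0 : 0 ≤ x / (x + 1) := div_nonneg hx hx1.le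
  have key : (x / (x + 1)) ^ p * (1:ℝ) ^ (1 - p) ≤ p * (x / (x + 1)) + (1 - p) * 1 :=
    Real.geom_mean_le_arith_mean2_weighted hp0.le (by linarith) ht0 zero_le_one (by ring)
  rw [Real.one_rpow, mul_one, mul_one, Real.div_rpow hx hx1.le] at key
  have hA : (0:ℝ) < (x + 1) ^ p := Real.rpow_pos_of_pos hx1 p
  have h2 : x ^ p ≤ (p * (x / (x + 1)) + (1 - p)) * (x + 1) ^ p :=
    (div_le_iff₀ hA).mp key
  have e1 : (x + 1) ^ (p - 1) = (x + 1) ^ p / (x + 1) := by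
    rw [Real.rpow_sub hx1, Real.rpow_one]
  rw [e1]
  have e2 : p * (x / (x + 1)) = p * x / (x + 1) := by ring
  rw [e2] at h2
  rw [div_le_iff₀ hA, mul_comm] at key
  have h3 : p * ((x + 1) ^ p / (x + 1)) = p * (x + 1) ^ p / (x + 1) := by ring
  rw [h3, div_le_iff₀ hx1]
  have hxp : p * x / (x + 1) * (x + 1) = p * x := by field_simp
  nlinarith [h2, hA]

private lemma sum_pow_le {p : ℝ} (hp0 : 0 < p) (hp1 : p ≤ 1) (n : ℕ) :
    ∑ j ∈ Finset.range n, ((j : ℝ) + 1) ^ (p - 1) ≤ (1 + (n : ℝ) ^ p) / p := by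
  induction n with
  | zero =>
    simp [Real.zero_rpow hp0.ne']
    positivity
  | succ n ih =>
    rw [Finset.sum_range_succ]
    have hb := bern_aux hp0 hp1 (n : ℝ) (Nat.cast_nonneg n)
    have hcast : ((n + 1 : ℕ) : ℝ) = (n : ℝ) + 1 := by push_cast; ring
    rw [hcast]
    have : ((n : ℝ) + 1) ^ (p - 1) ≤ (((n : ℝ) + 1) ^ p - (n : ℝ) ^ p) / p := by
      rw [le_div_iff₀ hp0]
      linarith [hb]
    have h := add_le_add ih this
    calc ∑ j ∈ Finset.range n, ((j : ℝ) + 1) ^ (p - 1) + ((n : ℝ) + 1) ^ (p - 1)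
        ≤ (1 + (n : ℝ) ^ p) / p + (((n : ℝ) + 1) ^ p - (n : ℝ) ^ p) / p := h
      _ = (1 + ((n : ℝ) + 1) ^ p) / p := by ring

/-- THEOREM 12 (inequality (3.4)): convolution-type estimate for polynomial sequences. -/
theorem polynomial_convolution_bound :
    ∀ γ β : ℝ, γ ∈ Set.Ioo (0:ℝ) 1 → 0 ≤ β → β < min γ (1 - γ) →
      ∃ C : ℝ, 0 < C ∧
        ∀ n : ℕ, 1 ≤ n →
          ∑ j ∈ Finset.range n,
              ((j : ℝ) + 1) ^ (-1 / γ + 1) * ((n - j : ℕ) : ℝ) ^ (-1 / γ + β / γ)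
            ≤ C * ((n : ℝ) + 1) ^ (-1 / γ + 1) := by
  intro γ β hγ hβ0 hβ
  obtain ⟨hγ0, hγ1⟩ := hγ
  rw [lt_min_iff] at hβ
  obtain ⟨hβγ, hβ1γ⟩ := hβ
  set a : ℝ := -1 / γ + 1 with ha_def
  set b : ℝ := -1 / γ + β / γ with hb_def
  have hγinv : 1 ≤ 1 / γ := by
    rw [le_div_iff₀ hγ0]; linarith
  have ha0 : a ≤ 0 := by rw [ha_def]; rw [neg_div]; linarith
  have hb1 : b < -1 := by
    rw [hb_def, ← add_div, div_lt_iff₀ hγ0]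
    linarith
  have hba : b < a := by
    rw [ha_def, hb_def]
    have : β / γ < 1 := by rw [div_lt_one hγ0]; linarith
    linarith
  set a' : ℝ := min (a - 1 - b) 0 with ha'_def
  set p : ℝ := a' + 1 with hp_def
  have ha'1 : -1 < a' := by
    rw [ha'_def, lt_min_iff]
    constructor <;> linarith
  have hp0 : 0 < p := by rw [hp_def]; linarith
  have hp1 : p ≤ 1 := by
    rw [hp_def, ha'_def]
    have := min_le_right (a - 1 - b) (0:ℝ)
    linarith
  have haa' : a ≤ a' := by
    rw [ha'_def, le_min_iff]
    exact ⟨by linarith, ha0⟩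
  have hpba : b + p ≤ a := by
    rw [hp_def, ha'_def]
    have := min_le_left (a - 1 - b) (0:ℝ)
    linarith
  -- summability of tail
  have hsum : Summable (fun i : ℕ => ((i : ℝ) + 1) ^ b) := by
    have h1 : Summable (fun n : ℕ => (n : ℝ) ^ b) := Real.summable_nat_rpow.mpr hb1
    have h2 := h1.comp_injective Nat.succ_injective
    refine h2.congr fun i => ?_
    simp only [Function.comp_apply, Nat.succ_eq_add_one, Nat.cast_add, Nat.cast_one]
  set T : ℝ := ∑' i : ℕ, ((i : ℝ) + 1) ^ b with hT_def
  have hT0 : 0 ≤ T := tsum_nonneg fun i => Real.rpow_nonneg (by positivity) b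
  set C : ℝ := 2 ^ (-a) * T + 2 ^ (-b) * (2 / p) with hC_def
  have hC0 : 0 < C := by
    rw [hC_def]
    have : (0:ℝ) < 2 ^ (-b) * (2 / p) := by positivity
    have h2 : (0:ℝ) ≤ 2 ^ (-a) * T := by positivity
    linarith
  refine ⟨C, hC0, fun n hn => ?_⟩
  have hn1 : (0:ℝ) < (n : ℝ) + 1 := by positivity
  have hhalf : (0:ℝ) < ((n : ℝ) + 1) / 2 := by positivity
  set A := (Finset.range n).filter (fun j => n ≤ 2 * j + 1) with hA_def
  set B := (Finset.range n).filter (fun j => ¬ n ≤ 2 * j + 1) with hB_def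
  have hsplit : ∑ j ∈ Finset.range n, ((j : ℝ) + 1) ^ a * ((n - j : ℕ) : ℝ) ^ b
      = ∑ j ∈ A, ((j : ℝ) + 1) ^ a * ((n - j : ℕ) : ℝ) ^ b
      + ∑ j ∈ B, ((j : ℝ) + 1) ^ a * ((n - j : ℕ) : ℝ) ^ b := by
    rw [hA_def, hB_def]
    exact (Finset.sum_filter_add_sum_filter_not _ _ _).symm
  -- bound on A-sum
  have hAbound : ∑ j ∈ A, ((j : ℝ) + 1) ^ a * ((n - j : ℕ) : ℝ) ^ b
      ≤ 2 ^ (-a) * ((n : ℝ) + 1) ^ a * T := by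
    have step1 : ∑ j ∈ A, ((j : ℝ) + 1) ^ a * ((n - j : ℕ) : ℝ) ^ b
        ≤ ∑ j ∈ A, (((n : ℝ) + 1) / 2) ^ a * ((n - j : ℕ) : ℝ) ^ b := by
      apply Finset.sum_le_sum
      intro j hj
      rw [hA_def, Finset.mem_filter] at hj
      obtain ⟨hjr, hjc⟩ := hj
      have hjc' : (n : ℝ) ≤ 2 * j + 1 := by exact_mod_cast hjc
      have hle : ((n : ℝ) + 1) / 2 ≤ (j : ℝ) + 1 := by linarith
      have := Real.rpow_le_rpow_of_nonpos hhalf hle ha0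
      exact mul_le_mul_of_nonneg_right this (Real.rpow_nonneg (Nat.cast_nonneg _) b)
    have step2 : ∑ j ∈ A, ((n - j : ℕ) : ℝ) ^ b ≤ T := by
      have hsub : ∑ j ∈ A, ((n - j : ℕ) : ℝ) ^ b
          ≤ ∑ j ∈ Finset.range n, ((n - j : ℕ) : ℝ) ^ b := by
        apply Finset.sum_le_sum_of_subset_of_nonneg (by rw [hA_def]; exact Finset.filter_subset _ _)
        intro j _ _
        exact Real.rpow_nonneg (Nat.cast_nonneg _) b
      have hrefl : ∑ j ∈ Finset.range n, ((n - j : ℕ) : ℝ) ^ b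
          = ∑ j ∈ Finset.range n, ((j : ℝ) + 1) ^ b := by
        rw [← Finset.sum_range_reflect (fun j => ((j : ℝ) + 1) ^ b) n]
        apply Finset.sum_congr rfl
        intro j hj
        rw [Finset.mem_range] at hj
        have : n - j = n - 1 - j + 1 := by omega
        rw [this]
        push_cast
        ring_nf
      have htsum : ∑ j ∈ Finset.range n, ((j : ℝ) + 1) ^ b ≤ T :=
        Summable.sum_le_tsum _ (fun i _ => Real.rpow_nonneg (by positivity) b) hsum
      linarith
    calc ∑ j ∈ A, ((j : ℝ) + 1) ^ a * ((n - j : ℕ) : ℝ) ^ b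
        ≤ ∑ j ∈ A, (((n : ℝ) + 1) / 2) ^ a * ((n - j : ℕ) : ℝ) ^ b := step1
      _ = (((n : ℝ) + 1) / 2) ^ a * ∑ j ∈ A, ((n - j : ℕ) : ℝ) ^ b := by
          rw [Finset.mul_sum]
      _ ≤ (((n : ℝ) + 1) / 2) ^ a * T := by
          exact mul_le_mul_of_nonneg_left step2 (Real.rpow_nonneg hhalf.le a)
      _ = 2 ^ (-a) * ((n : ℝ) + 1) ^ a * T := by
          rw [Real.div_rpow hn1.le (by norm_num : (0:ℝ) ≤ 2), Real.rpow_neg (by norm_num)]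
          ring
  -- bound on B-sum
  have hBbound : ∑ j ∈ B, ((j : ℝ) + 1) ^ a * ((n - j : ℕ) : ℝ) ^ b
      ≤ 2 ^ (-b) * (2 / p) * ((n : ℝ) + 1) ^ a := by
    have step1 : ∑ j ∈ B, ((j : ℝ) + 1) ^ a * ((n - j : ℕ) : ℝ) ^ b
        ≤ ∑ j ∈ B, ((j : ℝ) + 1) ^ (p - 1) * ((((n : ℝ) + 1) / 2) ^ b) := by
      apply Finset.sum_le_sum
      intro j hj
      rw [hB_def, Finset.mem_filter] at hj
      obtain ⟨hjr, hjc⟩ := hj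
      rw [Finset.mem_range] at hjr
      push_neg at hjc
      have hjc' : 2 * j + 2 ≤ n := by omega
      have hcast : ((n - j : ℕ) : ℝ) = (n : ℝ) - j := by
        rw [Nat.cast_sub hjr.le]
      have hjc'' : (2 : ℝ) * j + 2 ≤ n := by exact_mod_cast hjc'
      have hle : ((n : ℝ) + 1) / 2 ≤ ((n - j : ℕ) : ℝ) := by
        rw [hcast]; linarith
      have hb0 : b ≤ 0 := by linarith
      have h1 : ((n - j : ℕ) : ℝ) ^ b ≤ (((n : ℝ) + 1) / 2) ^ b :=
        Real.rpow_le_rpow_of_nonpos hhalf hle hb0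
      have h2 : ((j : ℝ) + 1) ^ a ≤ ((j : ℝ) + 1) ^ (p - 1) := by
        apply Real.rpow_le_rpow_of_exponent_le (by linarith [Nat.cast_nonneg (α := ℝ) j])
        rw [hp_def]; linarith
      have hf0 : (0:ℝ) ≤ ((j : ℝ) + 1) ^ a := Real.rpow_nonneg (by positivity) a
      have hg0 : (0:ℝ) ≤ (((n : ℝ) + 1) / 2) ^ b := Real.rpow_nonneg hhalf.le b
      calc ((j : ℝ) + 1) ^ a * ((n - j : ℕ) : ℝ) ^ b
          ≤ ((j : ℝ) + 1) ^ a * (((n : ℝ) + 1) / 2) ^ b :=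
            mul_le_mul_of_nonneg_left h1 hf0
        _ ≤ ((j : ℝ) + 1) ^ (p - 1) * (((n : ℝ) + 1) / 2) ^ b :=
            mul_le_mul_of_nonneg_right h2 hg0
    have step2 : ∑ j ∈ B, ((j : ℝ) + 1) ^ (p - 1) ≤ (1 + (n : ℝ) ^ p) / p := by
      have hsub : ∑ j ∈ B, ((j : ℝ) + 1) ^ (p - 1)
          ≤ ∑ j ∈ Finset.range n, ((j : ℝ) + 1) ^ (p - 1) := by
        apply Finset.sum_le_sum_of_subset_of_nonneg (by rw [hB_def]; exact Finset.filter_subset _ _)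
        intro j _ _
        exact Real.rpow_nonneg (by positivity) _
      linarith [sum_pow_le hp0 hp1 n]
    have hfinal : (((n : ℝ) + 1) / 2) ^ b * ((1 + (n : ℝ) ^ p) / p)
        ≤ 2 ^ (-b) * (2 / p) * ((n : ℝ) + 1) ^ a := by
      have h1 : (1 : ℝ) ≤ ((n : ℝ) + 1) ^ p := by
        calc (1:ℝ) = (1:ℝ) ^ p := (Real.one_rpow p).symm
          _ ≤ ((n : ℝ) + 1) ^ p :=
            Real.rpow_le_rpow zero_le_one (by linarith [Nat.cast_nonneg (α := ℝ) n]) hp0.le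
      have h2 : (n : ℝ) ^ p ≤ ((n : ℝ) + 1) ^ p :=
        Real.rpow_le_rpow (Nat.cast_nonneg n) (by linarith) hp0.le
      have h3 : 1 + (n : ℝ) ^ p ≤ 2 * ((n : ℝ) + 1) ^ p := by linarith
      have hgb : (0:ℝ) ≤ (((n : ℝ) + 1) / 2) ^ b := Real.rpow_nonneg hhalf.le b
      have h4 : (((n : ℝ) + 1) / 2) ^ b * ((1 + (n : ℝ) ^ p) / p)
          ≤ (((n : ℝ) + 1) / 2) ^ b * (2 * ((n : ℝ) + 1) ^ p / p) := by
        apply mul_le_mul_of_nonneg_left _ hgb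
        gcongr
      have h5 : (((n : ℝ) + 1) / 2) ^ b = 2 ^ (-b) * ((n : ℝ) + 1) ^ b := by
        rw [Real.div_rpow hn1.le (by norm_num : (0:ℝ) ≤ 2), Real.rpow_neg (by norm_num)]
        ring
      have h6 : ((n : ℝ) + 1) ^ b * ((n : ℝ) + 1) ^ p = ((n : ℝ) + 1) ^ (b + p) :=
        (Real.rpow_add hn1 b p).symm
      have h7 : ((n : ℝ) + 1) ^ (b + p) ≤ ((n : ℝ) + 1) ^ a :=
        Real.rpow_le_rpow_of_exponent_le (by push_cast; linarith [Nat.cast_nonneg (α := ℝ) n]) hpba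
      calc (((n : ℝ) + 1) / 2) ^ b * ((1 + (n : ℝ) ^ p) / p)
          ≤ (((n : ℝ) + 1) / 2) ^ b * (2 * ((n : ℝ) + 1) ^ p / p) := h4
        _ = 2 ^ (-b) * (2 / p) * (((n : ℝ) + 1) ^ b * ((n : ℝ) + 1) ^ p) := by
            rw [h5]; ring
        _ = 2 ^ (-b) * (2 / p) * ((n : ℝ) + 1) ^ (b + p) := by rw [h6]
        _ ≤ 2 ^ (-b) * (2 / p) * ((n : ℝ) + 1) ^ a := by
            apply mul_le_mul_of_nonneg_left h7
            positivity
    calc ∑ j ∈ B, ((j : ℝ) + 1) ^ a * ((n - j : ℕ) : ℝ) ^ b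
        ≤ ∑ j ∈ B, ((j : ℝ) + 1) ^ (p - 1) * ((((n : ℝ) + 1) / 2) ^ b) := step1
      _ = (((n : ℝ) + 1) / 2) ^ b * ∑ j ∈ B, ((j : ℝ) + 1) ^ (p - 1) := by
          rw [Finset.mul_sum]; apply Finset.sum_congr rfl; intros; ring
      _ ≤ (((n : ℝ) + 1) / 2) ^ b * ((1 + (n : ℝ) ^ p) / p) :=
          mul_le_mul_of_nonneg_left step2 (Real.rpow_nonneg hhalf.le b)
      _ ≤ 2 ^ (-b) * (2 / p) * ((n : ℝ) + 1) ^ a := hfinal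
  rw [hsplit]
  have hfin : 2 ^ (-a) * ((n : ℝ) + 1) ^ a * T + 2 ^ (-b) * (2 / p) * ((n : ℝ) + 1) ^ a
      = C * ((n : ℝ) + 1) ^ a := by
    rw [hC_def]; ring
  exact (add_le_add hAbound hBbound).trans hfin.le
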